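/- Matrix elements of the discrete Fourier transform in the Weyl-symmetrized bases: for all α, β ∈ 𝒵, (i) ⟨F_𝒵 e_β, e_α⟩_𝒵 = |𝒵|^{−1/2} Σ_{w∈W} e^{2πi⟨w(α),β⟩}; (ii) ⟨F_𝒵 ẽ_β, ẽ_α⟩_𝒵 = |𝒵|^{−1/2} Σ_{w∈W} det(w) e^{2πi⟨w(α),β⟩}; and, provided W contains an element of determinant −1, (iii) ⟨F_𝒵 e_β, ẽ_α⟩_𝒵 = 0 and, when Λ is in addition even, ⟨G_𝒵⁻¹ e_β, ẽ_α⟩_𝒵 = 0. -/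

import Mathlib

open MeasureTheory Complex
open scoped Real RealInnerProductSpace BigOperators

noncomputable section

/-- `ℝⁿ` as a Euclidean space. -/
abbrev EN (n : ℕ) := EuclideanSpace ℝ (Fin n)

open Classical

/-- The Kronecker delta `δ_γ ∈ ℂ^𝒵`, as the indicator of the `Λ`-coset of `γ`. -/
def deltaFn {n : ℕ} (Λ : AddSubgroup (EN n)) (γ : EN n) : EN n → ℂ :=
  fun γ₀ => if γ₀ - γ ∈ Λ then 1 else 0

/-- The Weyl-symmetrized basis vector `e_α = |W|^{-1/2} Σ_{w∈W} δ_{w(α)}`. -/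
def eInv {n : ℕ} (Λ : AddSubgroup (EN n)) (W : Finset (EN n ≃ₗᵢ[ℝ] EN n))
    (α : EN n) : EN n → ℂ :=
  fun γ₀ => (Real.sqrt W.card)⁻¹ * ∑ w ∈ W, deltaFn Λ (w α) γ₀

/-- The Weyl-anti-symmetrized basis vector
`ẽ_α = |W|^{-1/2} Σ_{w∈W} det(w) δ_{w(α)}`. -/
def eAnti {n : ℕ} (Λ : AddSubgroup (EN n)) (W : Finset (EN n ≃ₗᵢ[ℝ] EN n))
    (α : EN n) : EN n → ℂ :=
  fun γ₀ => (Real.sqrt W.card)⁻¹ *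
    ∑ w ∈ W, ((LinearMap.det w.toLinearEquiv.toLinearMap : ℝ) : ℂ) * deltaFn Λ (w α) γ₀

/-- The inner product `⟨x,y⟩_𝒵 = Σ_{γ∈𝒵} x(γ) conj (y(γ))` on `ℂ^𝒵`, with `R` a
set of coset representatives for `𝒵 = Λ*/Λ`. -/
def innZ {n : ℕ} (R : Finset (EN n)) (x y : EN n → ℂ) : ℂ :=
  ∑ γ ∈ R, x γ * (starRingEnd ℂ) (y γ)

/-- The discrete Fourier transform `F_𝒵(x)(γ) = |𝒵|^{-1/2} Σ_{γ̂∈𝒵} x(γ̂) e^{2πi⟨γ,γ̂⟩}`. -/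
def DFT0 {n : ℕ} (R : Finset (EN n)) (x : EN n → ℂ) : EN n → ℂ :=
  fun γ => (Real.sqrt R.card)⁻¹ *
    ∑ γh ∈ R, x γh * Complex.exp (2 * (π : ℂ) * I * (⟪γ, γh⟫ : ℂ))

/-- The inverse Gaussian operator `G_𝒵⁻¹(x)(γ) = e^{-πi⟨γ,γ⟩} x(γ)`. -/
def GZ0inv {n : ℕ} (x : EN n → ℂ) : EN n → ℂ :=
  fun γ => Complex.exp (-(π : ℂ) * I * (⟪γ, γ⟫ : ℂ)) * x γ

section AuxLemmas

variable {n : ℕ}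

private lemma conj_deltaFn (Λ : AddSubgroup (EN n)) (γ γ₀ : EN n) :
    (starRingEnd ℂ) (deltaFn Λ γ γ₀) = deltaFn Λ γ γ₀ := by
  unfold deltaFn; split <;> simp

private lemma exp_add_int (a : ℝ) (m : ℤ) :
    Complex.exp (2 * (π : ℂ) * I * ((a + m : ℝ) : ℂ)) =
      Complex.exp (2 * (π : ℂ) * I * (a : ℂ)) := by
  push_cast
  rw [mul_add, Complex.exp_add]
  have h : 2 * (π : ℂ) * I * (m : ℂ) = (m : ℂ) * (2 * π * I) := by ring
  rw [h, Complex.exp_int_mul_two_pi_mul_I, mul_one]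

private lemma sum_delta_exp (Λ Λd : AddSubgroup (EN n))
    (hΛd : ∀ γ, γ ∈ Λd ↔ ∀ l ∈ Λ, ∃ m : ℤ, ⟪l, γ⟫ = (m : ℝ))
    (R : Finset (EN n)) (hRrep : ∀ γ ∈ Λd, ∃! r, r ∈ R ∧ γ - r ∈ Λ)
    (δ γ : EN n) (hδ : δ ∈ Λd) (hγ : γ ∈ Λd) :
    ∑ r ∈ R, deltaFn Λ γ r * Complex.exp (2 * (π : ℂ) * I * ((⟪δ, r⟫ : ℝ) : ℂ)) =
      Complex.exp (2 * (π : ℂ) * I * ((⟪δ, γ⟫ : ℝ) : ℂ)) := by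
  obtain ⟨r₀, ⟨hr₀R, hr₀⟩, huniq⟩ := hRrep γ hγ
  have hδr : deltaFn Λ γ r₀ = 1 := by
    unfold deltaFn
    rw [if_pos]
    simpa using neg_mem hr₀
  rw [Finset.sum_eq_single r₀]
  · rw [hδr, one_mul]
    obtain ⟨m, hm⟩ := (hΛd δ).mp hδ (r₀ - γ) (by simpa using neg_mem hr₀)
    have key : (⟪r₀ - γ, δ⟫ : ℝ) = ⟪δ, r₀⟫ - ⟪δ, γ⟫ := by
      rw [inner_sub_left, real_inner_comm r₀ δ, real_inner_comm γ δ]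
    have h2 : (⟪δ, r₀⟫ : ℝ) = ⟪δ, γ⟫ + m := by
      rw [hm] at key; linarith
    rw [h2, exp_add_int]
  · intro r hrR hrne
    have h0 : deltaFn Λ γ r = 0 := by
      unfold deltaFn
      rw [if_neg]
      intro h
      exact hrne (huniq r ⟨hrR, by simpa using neg_mem h⟩)
    rw [h0, zero_mul]
  · intro h; exact absurd hr₀R h

private lemma mem_dual_map (Λ Λd : AddSubgroup (EN n))
    (hΛd : ∀ γ, γ ∈ Λd ↔ ∀ l ∈ Λ, ∃ m : ℤ, ⟪l, γ⟫ = (m : ℝ))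
    (W : Finset (EN n ≃ₗᵢ[ℝ] EN n))
    (hWΛ : ∀ u ∈ W, ∀ x : EN n, x ∈ Λ ↔ u x ∈ Λ)
    (u : EN n ≃ₗᵢ[ℝ] EN n) (hu : u ∈ W) (x : EN n) (hx : x ∈ Λd) : u x ∈ Λd := by
  rw [hΛd]
  intro l hl
  have h1 : u (u⁻¹ l) = l := by simp
  have h2 : u⁻¹ l ∈ Λ := (hWΛ u hu (u⁻¹ l)).mpr (by rw [h1]; exact hl)
  obtain ⟨m, hm⟩ := (hΛd x).mp hx (u⁻¹ l) h2
  refine ⟨m, ?_⟩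
  rw [← h1, LinearIsometryEquiv.inner_map_map]
  exact hm

private def detC (w : EN n ≃ₗᵢ[ℝ] EN n) : ℂ :=
  ((LinearMap.det w.toLinearEquiv.toLinearMap : ℝ) : ℂ)

private lemma det_pm (w : EN n ≃ₗᵢ[ℝ] EN n) :
    LinearMap.det w.toLinearEquiv.toLinearMap = 1 ∨
      LinearMap.det w.toLinearEquiv.toLinearMap = -1 := by
  classical
  set a := EuclideanSpace.basisFun (Fin n) ℝ
  have h := OrthonormalBasis.det_to_matrix_orthonormalBasis_real a (a.map w)
  have hco : ⇑(a.map w) = ⇑w.toLinearEquiv.toLinearMap ∘ ⇑a.toBasis := by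
    funext i; simp [OrthonormalBasis.map_apply]
  rw [hco, Module.Basis.det_comp_basis] at h
  simpa [Module.Basis.equiv_refl] using h

private lemma detC_pm (w : EN n ≃ₗᵢ[ℝ] EN n) : detC w = 1 ∨ detC w = -1 := by
  rcases det_pm w with h | h <;> [left; right] <;> simp [detC, h]

private lemma detC_mul (u v : EN n ≃ₗᵢ[ℝ] EN n) : detC (u * v) = detC u * detC v := by
  have h : (u * v).toLinearEquiv.toLinearMap =
      u.toLinearEquiv.toLinearMap ∘ₗ v.toLinearEquiv.toLinearMap := by
    ext x; rfl
  unfold detC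
  rw [h, LinearMap.det_comp]
  push_cast
  ring

private lemma detC_sq (w : EN n ≃ₗᵢ[ℝ] EN n) : detC w * detC w = 1 := by
  rcases detC_pm w with h | h <;> rw [h] <;> ring

private lemma detC_one : detC (1 : EN n ≃ₗᵢ[ℝ] EN n) = 1 := by
  have h : (1 : EN n ≃ₗᵢ[ℝ] EN n).toLinearEquiv.toLinearMap = LinearMap.id := rfl
  unfold detC
  rw [h, LinearMap.det_id]
  norm_num

private lemma detC_inv (w : EN n ≃ₗᵢ[ℝ] EN n) : detC w⁻¹ = detC w := by
  have h : detC w⁻¹ * detC w = 1 := by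
    rw [← detC_mul, inv_mul_cancel, detC_one]
  calc detC w⁻¹ = detC w⁻¹ * (detC w * detC w) := by rw [detC_sq, mul_one]
    _ = (detC w⁻¹ * detC w) * detC w := by ring
    _ = detC w := by rw [h, one_mul]

private lemma conj_detC (w : EN n ≃ₗᵢ[ℝ] EN n) :
    (starRingEnd ℂ) (detC w) = detC w := Complex.conj_ofReal _

private lemma sum_shift_inv_mul {G : Type*} [Group G] [DecidableEq G] (W : Finset G)
    (hWmul : ∀ u ∈ W, ∀ v ∈ W, u * v ∈ W) (hWinv : ∀ u ∈ W, u⁻¹ ∈ W)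
    (v : G) (hv : v ∈ W) (f : G → ℂ) :
    ∑ w ∈ W, f (w⁻¹ * v) = ∑ u ∈ W, f u := by
  refine Finset.sum_equiv ((Equiv.inv G).trans (Equiv.mulRight v)) ?_ ?_
  · intro w
    simp only [Equiv.trans_apply, Equiv.inv_apply, Equiv.coe_mulRight]
    constructor
    · intro hw; exact hWmul _ (hWinv w hw) v hv
    · intro h
      have h1 : (w⁻¹ * v) * v⁻¹ ∈ W := hWmul _ h _ (hWinv v hv)
      have h2 : w⁻¹ ∈ W := by simpa [mul_assoc] using h1
      simpa using hWinv _ h2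
  · intro w _
    simp only [Equiv.trans_apply, Equiv.inv_apply, Equiv.coe_mulRight]

private lemma sum_shift_mul_left {G : Type*} [Group G] [DecidableEq G] (W : Finset G)
    (hWmul : ∀ u ∈ W, ∀ v ∈ W, u * v ∈ W) (hWinv : ∀ u ∈ W, u⁻¹ ∈ W)
    (w₀ : G) (hw₀ : w₀ ∈ W) (f : G → ℂ) :
    ∑ w ∈ W, f (w₀ * w) = ∑ u ∈ W, f u := by
  refine Finset.sum_equiv (Equiv.mulLeft w₀) ?_ ?_
  · intro w
    simp only [Equiv.coe_mulLeft]
    constructor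
    · exact fun hw => hWmul w₀ hw₀ w hw
    · intro h
      have h1 := hWmul _ (hWinv w₀ hw₀) _ h
      simpa [← mul_assoc] using h1
  · intro w _; simp only [Equiv.coe_mulLeft]


private lemma sum_shift_inv_mul' {G : Type*} [Group G] [DecidableEq G] (W : Finset G)
    (hWmul : ∀ u ∈ W, ∀ v ∈ W, u * v ∈ W) (hWinv : ∀ u ∈ W, u⁻¹ ∈ W)
    (v : G) (hv : v ∈ W) (f g : G → ℂ) (hfg : ∀ w ∈ W, f w = g (w⁻¹ * v)) :
    ∑ w ∈ W, f w = ∑ u ∈ W, g u := by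
  refine Finset.sum_equiv ((Equiv.inv G).trans (Equiv.mulRight v)) ?_ ?_
  · intro w
    simp only [Equiv.trans_apply, Equiv.inv_apply, Equiv.coe_mulRight]
    constructor
    · intro hw; exact hWmul _ (hWinv w hw) v hv
    · intro h
      have h1 : (w⁻¹ * v) * v⁻¹ ∈ W := hWmul _ h _ (hWinv v hv)
      have h2 : w⁻¹ ∈ W := by simpa [mul_assoc] using h1
      simpa using hWinv _ h2
  · intro w hw
    simpa only [Equiv.trans_apply, Equiv.inv_apply, Equiv.coe_mulRight] using hfg w hw

private lemma sum_shift_mul_left' {G : Type*} [Group G] [DecidableEq G] (W : Finset G)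
    (hWmul : ∀ u ∈ W, ∀ v ∈ W, u * v ∈ W) (hWinv : ∀ u ∈ W, u⁻¹ ∈ W)
    (w₀ : G) (hw₀ : w₀ ∈ W) (f g : G → ℂ) (hfg : ∀ w ∈ W, f w = g (w₀ * w)) :
    ∑ w ∈ W, f w = ∑ u ∈ W, g u := by
  refine Finset.sum_equiv (Equiv.mulLeft w₀) ?_ ?_
  · intro w
    simp only [Equiv.coe_mulLeft]
    constructor
    · exact fun hw => hWmul w₀ hw₀ w hw
    · intro h
      have h1 := hWmul _ (hWinv w₀ hw₀) _ h
      simpa [← mul_assoc] using h1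
  · intro w hw
    simpa only [Equiv.coe_mulLeft] using hfg w hw

private lemma sum_detC_zero (W : Finset (EN n ≃ₗᵢ[ℝ] EN n))
    (hWmul : ∀ u ∈ W, ∀ v ∈ W, u * v ∈ W) (hWinv : ∀ u ∈ W, u⁻¹ ∈ W)
    (w₀ : EN n ≃ₗᵢ[ℝ] EN n) (hw₀ : w₀ ∈ W) (hdet : detC w₀ = -1) :
    ∑ w ∈ W, detC w = 0 := by
  have h1 : ∑ w ∈ W, detC (w₀ * w) = ∑ w ∈ W, detC w :=
    sum_shift_mul_left W hWmul hWinv w₀ hw₀ detC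
  have h2 : ∑ w ∈ W, detC (w₀ * w) = -∑ w ∈ W, detC w := by
    rw [← Finset.sum_neg_distrib]
    exact Finset.sum_congr rfl fun w _ => by rw [detC_mul, hdet]; ring
  have h3 : (2 : ℂ) * ∑ w ∈ W, detC w = 0 := by
    rw [two_mul]
    nth_rewrite 1 [← h1]
    rw [h2]
    ring
  exact (mul_eq_zero.mp h3).resolve_left two_ne_zero

private lemma master (Λ Λd : AddSubgroup (EN n))
    (hΛd : ∀ γ, γ ∈ Λd ↔ ∀ l ∈ Λ, ∃ m : ℤ, ⟪l, γ⟫ = (m : ℝ))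
    (R : Finset (EN n)) (hR : ∀ r ∈ R, r ∈ Λd)
    (hRrep : ∀ γ ∈ Λd, ∃! r, r ∈ R ∧ γ - r ∈ Λ)
    (W : Finset (EN n ≃ₗᵢ[ℝ] EN n))
    (α β : EN n) (hαW : ∀ v ∈ W, v α ∈ Λd) (hβW : ∀ w ∈ W, w β ∈ Λd)
    (c c' : (EN n ≃ₗᵢ[ℝ] EN n) → ℂ) :
    innZ R (DFT0 R (fun γ₀ => ∑ w ∈ W, c w * deltaFn Λ (w β) γ₀))
        (fun γ₀ => ∑ v ∈ W, c' v * deltaFn Λ (v α) γ₀) =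
      (Real.sqrt R.card)⁻¹ * ∑ v ∈ W, ∑ w ∈ W,
        (c w * (starRingEnd ℂ) (c' v)) *
          Complex.exp (2 * (π : ℂ) * I * ((⟪v α, w β⟫ : ℝ) : ℂ)) := by
  unfold innZ DFT0
  have step1 : ∀ γ ∈ R,
      (∑ γh ∈ R, (∑ w ∈ W, c w * deltaFn Λ (w β) γh) *
        Complex.exp (2 * (π : ℂ) * I * ((⟪γ, γh⟫ : ℝ) : ℂ))) =
      ∑ w ∈ W, c w * Complex.exp (2 * (π : ℂ) * I * ((⟪γ, w β⟫ : ℝ) : ℂ)) := by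
    intro γ hγ
    simp only [Finset.sum_mul]
    rw [Finset.sum_comm]
    refine Finset.sum_congr rfl fun w hw => ?_
    have hfac : ∑ γh ∈ R, c w * deltaFn Λ (w β) γh *
        Complex.exp (2 * (π : ℂ) * I * ((⟪γ, γh⟫ : ℝ) : ℂ)) =
        c w * ∑ γh ∈ R, deltaFn Λ (w β) γh *
          Complex.exp (2 * (π : ℂ) * I * ((⟪γ, γh⟫ : ℝ) : ℂ)) := by
      rw [Finset.mul_sum]
      exact Finset.sum_congr rfl fun x _ => by ring
    rw [hfac, sum_delta_exp Λ Λd hΛd R hRrep γ (w β) (hR γ hγ) (hβW w hw)]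
  calc
    ∑ γ ∈ R, (((Real.sqrt R.card)⁻¹ : ℝ) *
        ∑ γh ∈ R, (∑ w ∈ W, c w * deltaFn Λ (w β) γh) *
          Complex.exp (2 * (π : ℂ) * I * ((⟪γ, γh⟫ : ℝ) : ℂ))) *
        (starRingEnd ℂ) (∑ v ∈ W, c' v * deltaFn Λ (v α) γ)
      = ((Real.sqrt R.card)⁻¹ : ℝ) * ∑ γ ∈ R,
          (∑ w ∈ W, c w * Complex.exp (2 * (π : ℂ) * I * ((⟪γ, w β⟫ : ℝ) : ℂ))) *
          (∑ v ∈ W, (starRingEnd ℂ) (c' v) * deltaFn Λ (v α) γ) := by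
        rw [Finset.mul_sum]
        refine Finset.sum_congr rfl fun γ hγ => ?_
        rw [step1 γ hγ]
        simp only [map_sum, map_mul, conj_deltaFn]
        ring
    _ = ((Real.sqrt R.card)⁻¹ : ℝ) * ∑ γ ∈ R, ∑ v ∈ W, ∑ w ∈ W,
          (c w * (starRingEnd ℂ) (c' v)) *
          (deltaFn Λ (v α) γ *
            Complex.exp (2 * (π : ℂ) * I * ((⟪w β, γ⟫ : ℝ) : ℂ))) := by
        congr 1
        refine Finset.sum_congr rfl fun γ hγ => ?_
        rw [Finset.sum_mul_sum, Finset.sum_comm]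
        refine Finset.sum_congr rfl fun v hv => Finset.sum_congr rfl fun w hw => ?_
        rw [real_inner_comm γ (w β)]
        ring
    _ = ((Real.sqrt R.card)⁻¹ : ℝ) * ∑ v ∈ W, ∑ w ∈ W,
          (c w * (starRingEnd ℂ) (c' v)) *
          ∑ γ ∈ R, deltaFn Λ (v α) γ *
            Complex.exp (2 * (π : ℂ) * I * ((⟪w β, γ⟫ : ℝ) : ℂ)) := by
        congr 1
        rw [Finset.sum_comm]
        refine Finset.sum_congr rfl fun v hv => ?_
        rw [Finset.sum_comm]
        refine Finset.sum_congr rfl fun w hw => ?_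
        rw [← Finset.mul_sum]
    _ = ((Real.sqrt R.card)⁻¹ : ℝ) * ∑ v ∈ W, ∑ w ∈ W,
          (c w * (starRingEnd ℂ) (c' v)) *
          Complex.exp (2 * (π : ℂ) * I * ((⟪v α, w β⟫ : ℝ) : ℂ)) := by
        congr 1
        refine Finset.sum_congr rfl fun v hv => Finset.sum_congr rfl fun w hw => ?_
        rw [sum_delta_exp Λ Λd hΛd R hRrep (w β) (v α) (hβW w hw) (hαW v hv),
          real_inner_comm (w β) (v α)]

private lemma sum_delta_delta (Λ Λd : AddSubgroup (EN n))
    (hΛd : ∀ γ, γ ∈ Λd ↔ ∀ l ∈ Λ, ∃ m : ℤ, ⟪l, γ⟫ = (m : ℝ))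
    (R : Finset (EN n)) (hRrep : ∀ γ ∈ Λd, ∃! r, r ∈ R ∧ γ - r ∈ Λ)
    (heven : ∀ l ∈ Λ, ∃ m : ℤ, ⟪l, l⟫ = 2 * (m : ℝ))
    (x y : EN n) (hx : x ∈ Λd) :
    ∑ r ∈ R, Complex.exp (-(π : ℂ) * I * ((⟪r, r⟫ : ℝ) : ℂ)) *
        (deltaFn Λ x r * deltaFn Λ y r) =
      (if y - x ∈ Λ then 1 else 0) *
        Complex.exp (-(π : ℂ) * I * ((⟪x, x⟫ : ℝ) : ℂ)) := by
  obtain ⟨r₀, ⟨hr₀R, hr₀⟩, huniq⟩ := hRrep x hx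
  have hlam : r₀ - x ∈ Λ := by simpa using neg_mem hr₀
  rw [Finset.sum_eq_single r₀]
  · have hδ1 : deltaFn Λ x r₀ = 1 := by
      unfold deltaFn; rw [if_pos hlam]
    obtain ⟨m, hm⟩ := (hΛd x).mp hx (r₀ - x) hlam
    obtain ⟨k, hk⟩ := heven (r₀ - x) hlam
    have hdec : r₀ = x + (r₀ - x) := by abel
    have expand : (⟪r₀, r₀⟫ : ℝ) = ⟪x, x⟫ + 2 * ⟪x, r₀ - x⟫ + ⟪r₀ - x, r₀ - x⟫ := by
      nth_rewrite 1 [hdec]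
      nth_rewrite 2 [hdec]
      rw [real_inner_add_add_self]
    have hinner : (⟪r₀, r₀⟫ : ℝ) = ⟪x, x⟫ + 2 * ((m : ℝ) + k) := by
      rw [expand, real_inner_comm (r₀ - x) x, hm, hk]; ring
    have hexp : Complex.exp (-(π : ℂ) * I * ((⟪r₀, r₀⟫ : ℝ) : ℂ)) =
        Complex.exp (-(π : ℂ) * I * ((⟪x, x⟫ : ℝ) : ℂ)) := by
      rw [hinner]
      push_cast
      rw [mul_add, Complex.exp_add]
      have h : -(π : ℂ) * I * (2 * ((m : ℂ) + (k : ℂ))) =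
          ((-(m + k) : ℤ) : ℂ) * (2 * π * I) := by push_cast; ring
      rw [h, Complex.exp_int_mul_two_pi_mul_I, mul_one]
    have hiff : (r₀ - y ∈ Λ) ↔ (y - x ∈ Λ) := by
      constructor
      · intro h
        have h1 := sub_mem hlam h
        have h2 : (r₀ - x) - (r₀ - y) = y - x := by abel
        rwa [h2] at h1
      · intro h
        have h1 := sub_mem hlam h
        have h2 : (r₀ - x) - (y - x) = r₀ - y := by abel
        rwa [h2] at h1
    rw [hδ1, hexp]
    unfold deltaFn
    rw [if_congr hiff rfl rfl]
    split <;> ring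
  · intro r hrR hrne
    have h0 : deltaFn Λ x r = 0 := by
      unfold deltaFn
      rw [if_neg]
      intro h
      exact hrne (huniq r ⟨hrR, by simpa using neg_mem h⟩)
    rw [h0, zero_mul, mul_zero]
  · intro h; exact absurd hr₀R h

private lemma master2 (Λ Λd : AddSubgroup (EN n))
    (hΛd : ∀ γ, γ ∈ Λd ↔ ∀ l ∈ Λ, ∃ m : ℤ, ⟪l, γ⟫ = (m : ℝ))
    (R : Finset (EN n)) (hRrep : ∀ γ ∈ Λd, ∃! r, r ∈ R ∧ γ - r ∈ Λ)
    (heven : ∀ l ∈ Λ, ∃ m : ℤ, ⟪l, l⟫ = 2 * (m : ℝ))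
    (W : Finset (EN n ≃ₗᵢ[ℝ] EN n))
    (α β : EN n) (hβW : ∀ w ∈ W, w β ∈ Λd)
    (c c' : (EN n ≃ₗᵢ[ℝ] EN n) → ℂ) :
    innZ R (GZ0inv (fun γ₀ => ∑ w ∈ W, c w * deltaFn Λ (w β) γ₀))
        (fun γ₀ => ∑ v ∈ W, c' v * deltaFn Λ (v α) γ₀) =
      Complex.exp (-(π : ℂ) * I * ((⟪β, β⟫ : ℝ) : ℂ)) *
        ∑ v ∈ W, ∑ w ∈ W, (c w * (starRingEnd ℂ) (c' v)) *
          (if v α - w β ∈ Λ then 1 else 0) := by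
  unfold innZ GZ0inv
  calc
    ∑ γ ∈ R, Complex.exp (-(π : ℂ) * I * ((⟪γ, γ⟫ : ℝ) : ℂ)) *
        (∑ w ∈ W, c w * deltaFn Λ (w β) γ) *
        (starRingEnd ℂ) (∑ v ∈ W, c' v * deltaFn Λ (v α) γ)
      = ∑ γ ∈ R, ∑ v ∈ W, ∑ w ∈ W, (c w * (starRingEnd ℂ) (c' v)) *
          (Complex.exp (-(π : ℂ) * I * ((⟪γ, γ⟫ : ℝ) : ℂ)) *
            (deltaFn Λ (w β) γ * deltaFn Λ (v α) γ)) := by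
        refine Finset.sum_congr rfl fun γ hγ => ?_
        simp only [map_sum, map_mul, conj_deltaFn]
        rw [mul_assoc, Finset.sum_mul_sum, Finset.mul_sum, Finset.sum_comm]
        refine Finset.sum_congr rfl fun v hv => ?_
        rw [Finset.mul_sum]
        refine Finset.sum_congr rfl fun w hw => ?_
        ring
    _ = ∑ v ∈ W, ∑ w ∈ W, (c w * (starRingEnd ℂ) (c' v)) *
          ((if v α - w β ∈ Λ then 1 else 0) *
            Complex.exp (-(π : ℂ) * I * ((⟪w β, w β⟫ : ℝ) : ℂ))) := by
        rw [Finset.sum_comm]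
        refine Finset.sum_congr rfl fun v hv => ?_
        rw [Finset.sum_comm]
        refine Finset.sum_congr rfl fun w hw => ?_
        rw [← Finset.mul_sum,
          sum_delta_delta Λ Λd hΛd R hRrep heven (w β) (v α) (hβW w hw)]
    _ = Complex.exp (-(π : ℂ) * I * ((⟪β, β⟫ : ℝ) : ℂ)) *
        ∑ v ∈ W, ∑ w ∈ W, (c w * (starRingEnd ℂ) (c' v)) *
          (if v α - w β ∈ Λ then 1 else 0) := by
        rw [Finset.mul_sum]
        refine Finset.sum_congr rfl fun v hv => ?_
        rw [Finset.mul_sum]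
        refine Finset.sum_congr rfl fun w hw => ?_
        rw [LinearIsometryEquiv.inner_map_map]
        ring

private lemma DFT0_const_smul (R : Finset (EN n)) (a : ℂ) (x : EN n → ℂ) :
    DFT0 R (fun γ => a * x γ) = fun γ => a * DFT0 R x γ := by
  funext γ
  unfold DFT0
  rw [show ∑ γh ∈ R, (a * x γh) *
      Complex.exp (2 * (π : ℂ) * I * ((⟪γ, γh⟫ : ℝ) : ℂ)) =
      a * ∑ γh ∈ R, x γh * Complex.exp (2 * (π : ℂ) * I * ((⟪γ, γh⟫ : ℝ) : ℂ)) from by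
    rw [Finset.mul_sum]; exact Finset.sum_congr rfl fun _ _ => by ring]
  ring

private lemma GZ0inv_const_smul (a : ℂ) (x : EN n → ℂ) :
    GZ0inv (fun γ => a * x γ) = fun γ => a * GZ0inv x γ := by
  funext γ
  unfold GZ0inv
  ring

private lemma innZ_smul_left (R : Finset (EN n)) (a : ℂ) (x y : EN n → ℂ) :
    innZ R (fun γ => a * x γ) y = a * innZ R x y := by
  unfold innZ
  rw [Finset.mul_sum]
  exact Finset.sum_congr rfl fun _ _ => by ring

private lemma innZ_smul_right (R : Finset (EN n)) (a : ℝ) (x y : EN n → ℂ) :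
    innZ R x (fun γ => (a : ℂ) * y γ) = a * innZ R x y := by
  unfold innZ
  rw [Finset.mul_sum]
  refine Finset.sum_congr rfl fun γ _ => ?_
  rw [map_mul, Complex.conj_ofReal]
  ring

end AuxLemmas

/-- matrix elements of the discrete Fourier transform in the
Weyl-symmetrized bases: for `α, β ∈ Λ*`,
(i) `⟨F_𝒵 e_β, e_α⟩_𝒵 = |𝒵|^{-1/2} Σ_{w∈W} e^{2πi⟨w(α),β⟩}`;
(ii) `⟨F_𝒵 ẽ_β, ẽ_α⟩_𝒵 = |𝒵|^{-1/2} Σ_{w∈W} det(w) e^{2πi⟨w(α),β⟩}`;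
(iii) provided `W` contains an element of determinant `−1`, `⟨F_𝒵 e_β, ẽ_α⟩_𝒵 = 0`
and, when `Λ` is in addition even, `⟨G_𝒵⁻¹ e_β, ẽ_α⟩_𝒵 = 0`. -/
theorem matrix_elements_weyl_bases
    (n : ℕ) (Λ Λd : AddSubgroup (EN n))
    (bE : Module.Basis (Fin n) ℝ (EN n))
    (hΛ : ∀ x, x ∈ Λ ↔ ∃ c : Fin n → ℤ, x = ∑ i, (c i : ℝ) • bE i)
    (hint : ∀ x ∈ Λ, ∀ y ∈ Λ, ∃ m : ℤ, ⟪x, y⟫ = (m : ℝ))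
    (hΛd : ∀ γ, γ ∈ Λd ↔ ∀ l ∈ Λ, ∃ m : ℤ, ⟪l, γ⟫ = (m : ℝ))
    (R : Finset (EN n)) (hR : ∀ r ∈ R, r ∈ Λd)
    (hRrep : ∀ γ ∈ Λd, ∃! r, r ∈ R ∧ γ - r ∈ Λ)
    (W : Finset (EN n ≃ₗᵢ[ℝ] EN n))
    (hW1 : (1 : EN n ≃ₗᵢ[ℝ] EN n) ∈ W)
    (hWmul : ∀ u ∈ W, ∀ v ∈ W, u * v ∈ W)
    (hWinv : ∀ u ∈ W, u⁻¹ ∈ W)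
    (hWΛ : ∀ u ∈ W, ∀ x : EN n, x ∈ Λ ↔ u x ∈ Λ)
    (α β : EN n) (hα : α ∈ Λd) (hβ : β ∈ Λd) :
    innZ R (DFT0 R (eInv Λ W β)) (eInv Λ W α) =
        (Real.sqrt R.card)⁻¹ *
          ∑ w ∈ W, Complex.exp (2 * (π : ℂ) * I * (⟪w α, β⟫ : ℂ)) ∧
    innZ R (DFT0 R (eAnti Λ W β)) (eAnti Λ W α) =
        (Real.sqrt R.card)⁻¹ *
          ∑ w ∈ W, ((LinearMap.det w.toLinearEquiv.toLinearMap : ℝ) : ℂ) *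
            Complex.exp (2 * (π : ℂ) * I * (⟪w α, β⟫ : ℂ)) ∧
    ((∃ w ∈ W, LinearMap.det w.toLinearEquiv.toLinearMap = -1) →
      innZ R (DFT0 R (eInv Λ W β)) (eAnti Λ W α) = 0 ∧
      ((∀ l ∈ Λ, ∃ m : ℤ, ⟪l, l⟫ = 2 * (m : ℝ)) →
        innZ R (GZ0inv (eInv Λ W β)) (eAnti Λ W α) = 0)) := by
  classical
  have hαW : ∀ v ∈ W, v α ∈ Λd := fun v hv => mem_dual_map Λ Λd hΛd W hWΛ v hv α hα
  have hβW : ∀ w ∈ W, w β ∈ Λd := fun w hw => mem_dual_map Λ Λd hΛd W hWΛ w hw β hβ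
  have hWcard : (0 : ℝ) < W.card := by
    exact_mod_cast Finset.card_pos.mpr ⟨1, hW1⟩
  set t : ℝ := (Real.sqrt W.card)⁻¹ with ht_def
  have ht : t * t * (W.card : ℝ) = 1 := by
    rw [ht_def, ← mul_inv, Real.mul_self_sqrt (le_of_lt hWcard)]
    exact inv_mul_cancel₀ (ne_of_gt hWcard)
  have htC : ((t : ℝ) : ℂ) * ((t : ℝ) : ℂ) * ((W.card : ℕ) : ℂ) = 1 := by
    exact_mod_cast ht
  have hip : ∀ w v : EN n ≃ₗᵢ[ℝ] EN n, (⟪v α, w β⟫ : ℝ) = ⟪(w⁻¹ * v) α, β⟫ := by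
    intro w v
    have h1 : w⁻¹ (w β) = β := by simp
    calc (⟪v α, w β⟫ : ℝ) = ⟪w⁻¹ (v α), w⁻¹ (w β)⟫ :=
          (LinearIsometryEquiv.inner_map_map w⁻¹ (v α) (w β)).symm
      _ = ⟪(w⁻¹ * v) α, β⟫ := by rw [h1]; rfl
  have heβ : eInv Λ W β = fun γ₀ => (t : ℂ) * ∑ w ∈ W, (1 : ℂ) * deltaFn Λ (w β) γ₀ := by
    funext γ₀; simp only [eInv, one_mul, ht_def]
  have heα : eInv Λ W α = fun γ₀ => (t : ℂ) * ∑ v ∈ W, (1 : ℂ) * deltaFn Λ (v α) γ₀ := by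
    funext γ₀; simp only [eInv, one_mul, ht_def]
  have heAα : eAnti Λ W α = fun γ₀ => (t : ℂ) * ∑ v ∈ W, detC v * deltaFn Λ (v α) γ₀ := by
    funext γ₀; simp only [eAnti, detC, ht_def]
  have heAβ : eAnti Λ W β = fun γ₀ => (t : ℂ) * ∑ w ∈ W, detC w * deltaFn Λ (w β) γ₀ := by
    funext γ₀; simp only [eAnti, detC, ht_def]
  have expand : ∀ (s S : ℂ), (t : ℂ) * ((t : ℂ) * (s * (((W.card : ℕ) : ℂ) * S))) =
      ((t : ℂ) * (t : ℂ) * ((W.card : ℕ) : ℂ)) * (s * S) := fun s S => by ring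
  refine ⟨?_, ?_, ?_⟩
  · -- part (i)
    rw [heβ, heα, DFT0_const_smul, innZ_smul_left, innZ_smul_right,
      master Λ Λd hΛd R hR hRrep W α β hαW hβW (fun _ => 1) (fun _ => 1)]
    simp only [map_one, one_mul]
    have hsum : ∀ v ∈ W,
        ∑ w ∈ W, Complex.exp (2 * (π : ℂ) * I * ((⟪v α, w β⟫ : ℝ) : ℂ)) =
        ∑ u ∈ W, Complex.exp (2 * (π : ℂ) * I * ((⟪u α, β⟫ : ℝ) : ℂ)) := by
      intro v hv
      refine sum_shift_inv_mul' W hWmul hWinv v hv _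
        (fun u => Complex.exp (2 * (π : ℂ) * I * ((⟪u α, β⟫ : ℝ) : ℂ))) ?_
      intro w _
      show Complex.exp (2 * (π : ℂ) * I * ((⟪v α, w β⟫ : ℝ) : ℂ)) =
        Complex.exp (2 * (π : ℂ) * I * ((⟪(w⁻¹ * v) α, β⟫ : ℝ) : ℂ))
      rw [hip w v]
    rw [Finset.sum_congr rfl hsum, Finset.sum_const, nsmul_eq_mul, expand, htC, one_mul]
  · -- part (ii)
    rw [heAβ, heAα, DFT0_const_smul, innZ_smul_left, innZ_smul_right,
      master Λ Λd hΛd R hR hRrep W α β hαW hβW detC detC]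
    simp only [conj_detC]
    have hsum : ∀ v ∈ W,
        ∑ w ∈ W, (detC w * detC v) *
            Complex.exp (2 * (π : ℂ) * I * ((⟪v α, w β⟫ : ℝ) : ℂ)) =
        ∑ u ∈ W, detC u * Complex.exp (2 * (π : ℂ) * I * ((⟪u α, β⟫ : ℝ) : ℂ)) := by
      intro v hv
      calc ∑ w ∈ W, (detC w * detC v) *
            Complex.exp (2 * (π : ℂ) * I * ((⟪v α, w β⟫ : ℝ) : ℂ))
          = ∑ u ∈ W, (detC (v * u⁻¹) * detC v) *
              Complex.exp (2 * (π : ℂ) * I * ((⟪u α, β⟫ : ℝ) : ℂ)) := by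
            refine sum_shift_inv_mul' W hWmul hWinv v hv _
              (fun u => (detC (v * u⁻¹) * detC v) *
                Complex.exp (2 * (π : ℂ) * I * ((⟪u α, β⟫ : ℝ) : ℂ))) ?_
            intro w _
            show (detC w * detC v) *
                Complex.exp (2 * (π : ℂ) * I * ((⟪v α, w β⟫ : ℝ) : ℂ)) =
              (detC (v * (w⁻¹ * v)⁻¹) * detC v) *
                Complex.exp (2 * (π : ℂ) * I * ((⟪(w⁻¹ * v) α, β⟫ : ℝ) : ℂ))
            have harg : v * (w⁻¹ * v)⁻¹ = w := by group
            rw [harg, hip w v]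
        _ = ∑ u ∈ W, detC u *
              Complex.exp (2 * (π : ℂ) * I * ((⟪u α, β⟫ : ℝ) : ℂ)) := by
            refine Finset.sum_congr rfl fun u _ => ?_
            rw [detC_mul, detC_inv,
              show detC v * detC u * detC v = (detC v * detC v) * detC u from by ring,
              detC_sq, one_mul]
    rw [Finset.sum_congr rfl hsum, Finset.sum_const, nsmul_eq_mul, expand, htC, one_mul]
    show _ = (Real.sqrt R.card)⁻¹ *
      ∑ w ∈ W, detC w * Complex.exp (2 * (π : ℂ) * I * ((⟪w α, β⟫ : ℝ) : ℂ))
    rfl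
  · -- part (iii)
    rintro ⟨w₀, hw₀, hdet⟩
    have hdetC : detC w₀ = -1 := by
      simp only [detC, hdet]
      norm_num
    have hS0 : ∑ w ∈ W, detC w = 0 := sum_detC_zero W hWmul hWinv w₀ hw₀ hdetC
    constructor
    · -- ⟨F e_β, ẽ_α⟩ = 0
      rw [heβ, heAα, DFT0_const_smul, innZ_smul_left, innZ_smul_right,
        master Λ Λd hΛd R hR hRrep W α β hαW hβW (fun _ => 1) detC]
      simp only [conj_detC, one_mul]
      have hzero : ∑ v ∈ W, ∑ w ∈ W, detC v *
          Complex.exp (2 * (π : ℂ) * I * ((⟪v α, w β⟫ : ℝ) : ℂ)) = 0 := by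
        rw [Finset.sum_comm]
        have hsum : ∀ w ∈ W, ∑ v ∈ W, detC v *
            Complex.exp (2 * (π : ℂ) * I * ((⟪v α, w β⟫ : ℝ) : ℂ)) =
            detC w * ∑ u ∈ W, detC u *
              Complex.exp (2 * (π : ℂ) * I * ((⟪u α, β⟫ : ℝ) : ℂ)) := by
          intro w hw
          calc ∑ v ∈ W, detC v *
              Complex.exp (2 * (π : ℂ) * I * ((⟪v α, w β⟫ : ℝ) : ℂ))
              = ∑ u ∈ W, detC (w * u) *
                  Complex.exp (2 * (π : ℂ) * I * ((⟪u α, β⟫ : ℝ) : ℂ)) := by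
                refine sum_shift_mul_left' W hWmul hWinv w⁻¹ (hWinv w hw) _
                  (fun u => detC (w * u) *
                    Complex.exp (2 * (π : ℂ) * I * ((⟪u α, β⟫ : ℝ) : ℂ))) ?_
                intro v _
                show detC v *
                    Complex.exp (2 * (π : ℂ) * I * ((⟪v α, w β⟫ : ℝ) : ℂ)) =
                  detC (w * (w⁻¹ * v)) *
                    Complex.exp (2 * (π : ℂ) * I * ((⟪(w⁻¹ * v) α, β⟫ : ℝ) : ℂ))
                have harg : w * (w⁻¹ * v) = v := by group
                rw [harg, hip w v]
            _ = detC w * ∑ u ∈ W, detC u *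
                  Complex.exp (2 * (π : ℂ) * I * ((⟪u α, β⟫ : ℝ) : ℂ)) := by
                rw [Finset.mul_sum]
                refine Finset.sum_congr rfl fun u _ => ?_
                rw [detC_mul]
                ring
        rw [Finset.sum_congr rfl hsum, ← Finset.sum_mul, hS0, zero_mul]
      rw [hzero]
      ring
    · -- even case
      intro heven
      rw [heβ, heAα, GZ0inv_const_smul, innZ_smul_left, innZ_smul_right,
        master2 Λ Λd hΛd R hRrep heven W α β hβW (fun _ => 1) detC]
      simp only [conj_detC, one_mul]
      have hzero : ∑ v ∈ W, ∑ w ∈ W, detC v *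
          (if v α - w β ∈ Λ then (1 : ℂ) else 0) = 0 := by
        rw [Finset.sum_comm]
        have hsum : ∀ w ∈ W, ∑ v ∈ W, detC v *
            (if v α - w β ∈ Λ then (1 : ℂ) else 0) =
            detC w * ∑ u ∈ W, detC u * (if u α - β ∈ Λ then (1 : ℂ) else 0) := by
          intro w hw
          calc ∑ v ∈ W, detC v * (if v α - w β ∈ Λ then (1 : ℂ) else 0)
              = ∑ u ∈ W, detC (w * u) * (if u α - β ∈ Λ then (1 : ℂ) else 0) := by
                refine sum_shift_mul_left' W hWmul hWinv w⁻¹ (hWinv w hw) _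
                  (fun u => detC (w * u) * (if u α - β ∈ Λ then (1 : ℂ) else 0)) ?_
                intro v _
                show detC v * (if v α - w β ∈ Λ then (1 : ℂ) else 0) =
                  detC (w * (w⁻¹ * v)) * (if (w⁻¹ * v) α - β ∈ Λ then (1 : ℂ) else 0)
                have harg : w * (w⁻¹ * v) = v := by group
                have hcond : ((w⁻¹ * v) α - β ∈ Λ) ↔ (v α - w β ∈ Λ) := by
                  rw [hWΛ w hw]
                  have himg : w ((w⁻¹ * v) α - β) = v α - w β := by
                    rw [map_sub]
                    congr 1
                    show (w * (w⁻¹ * v)) α = v α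
                    rw [harg]
                  rw [himg]
                rw [harg, if_congr hcond rfl rfl]
            _ = detC w * ∑ u ∈ W, detC u * (if u α - β ∈ Λ then (1 : ℂ) else 0) := by
                rw [Finset.mul_sum]
                refine Finset.sum_congr rfl fun u _ => ?_
                rw [detC_mul]
                ring
        rw [Finset.sum_congr rfl hsum, ← Finset.sum_mul, hS0, zero_mul]
      rw [hzero]
      ring
  

end
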